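/- arXiv:2312.00967 — 3 statements merged into one kernel-verified Lean document; each statement's English description precedes it below -/
import Mathlib

section
/- For every initial condition (x₀, y₀) ∈ ℝ², the nonlinear pendulum ODE has a global-in-time solution: there exist differentiable functions x, y : ℝ → ℝ with x(0) = x₀, y(0) = y₀, such that for every t ∈ ℝ the derivative of x at t equals y(t) and the derivative of y at t equals −sin(2π·x(t)). -/
open Real

section PendulumAux
open Set

noncomputable def pF : ℝ × ℝ → ℝ × ℝ := fun p => (p.2, -Real.sin (2 * Real.pi * p.1))

noncomputable def pK : NNReal := ⟨2 * Real.pi + 1, by positivity⟩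

lemma sin_lip : LipschitzWith 1 Real.sin := by
  apply lipschitzWith_of_nnnorm_deriv_le Real.differentiable_sin
  intro x
  rw [Real.deriv_sin, ← NNReal.coe_le_coe, coe_nnnorm, Real.norm_eq_abs]
  simpa using Real.abs_cos_le_one x

lemma pF_lip : LipschitzWith pK pF := by
  apply LipschitzWith.of_dist_le_mul
  intro p q
  have hK : (pK : ℝ) = 2 * Real.pi + 1 := rfl
  have hfst : dist p.1 q.1 ≤ dist p q := by rw [Prod.dist_eq]; exact le_max_left _ _
  have hsnd : dist p.2 q.2 ≤ dist p q := by rw [Prod.dist_eq]; exact le_max_right _ _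
  have h2 : dist (-Real.sin (2 * Real.pi * p.1)) (-Real.sin (2 * Real.pi * q.1))
      ≤ (2 * Real.pi) * dist p q := by
    rw [dist_neg_neg]
    calc dist (Real.sin (2 * Real.pi * p.1)) (Real.sin (2 * Real.pi * q.1))
        ≤ 1 * dist (2 * Real.pi * p.1) (2 * Real.pi * q.1) := sin_lip.dist_le_mul _ _
      _ = (2 * Real.pi) * dist p.1 q.1 := by
          rw [one_mul, Real.dist_eq, Real.dist_eq, ← mul_sub, abs_mul]
          rw [abs_of_pos (by positivity : (0:ℝ) < 2 * Real.pi)]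
      _ ≤ (2 * Real.pi) * dist p q := by nlinarith [Real.pi_pos]
  have hd : (0:ℝ) ≤ dist p q := dist_nonneg
  rw [hK, Prod.dist_eq]
  apply max_le <;> simp only [pF] <;> nlinarith [Real.pi_pos]

lemma pLocal (t₀ : ℝ) (p : ℝ × ℝ) :
    ∃ f : ℝ → ℝ × ℝ, f t₀ = p ∧ ∀ t ∈ Icc (t₀ - 4⁻¹) (t₀ + 4⁻¹),
      HasDerivWithinAt f (pF (f t)) (Icc (t₀ - 4⁻¹) (t₀ + 4⁻¹)) t := by
  have hpl : IsPicardLindelof (fun _ x => pF x) (tmin := t₀ - 4⁻¹) (tmax := t₀ + 4⁻¹)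
      ⟨t₀, by constructor <;> linarith⟩ p ⟨‖p‖ + 1, by positivity⟩ 0
      ⟨2 * ‖p‖ + 1, by positivity⟩ pK :=
    { lipschitzOnWith := fun t _ => pF_lip.lipschitzOnWith
      continuousOn := fun x _ => continuousOn_const
      norm_le := by
        intro t _ x hx
        show ‖pF x‖ ≤ 2 * ‖p‖ + 1
        have hx' : ‖x‖ ≤ 2 * ‖p‖ + 1 := by
          have := norm_sub_norm_le x p
          have : ‖x - p‖ ≤ ‖p‖ + 1 := mem_closedBall_iff_norm.mp hx
          linarith
        have h1 : ‖x.2‖ ≤ ‖x‖ := norm_snd_le x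
        have h2 : ‖-Real.sin (2 * Real.pi * x.1)‖ ≤ 1 := by
          rw [norm_neg, Real.norm_eq_abs]; exact Real.abs_sin_le_one _
        have hp0 : (0:ℝ) ≤ ‖p‖ := norm_nonneg p
        have hnorm : ‖pF x‖ = max ‖x.2‖ ‖-Real.sin (2 * Real.pi * x.1)‖ := by
          simp [pF, Prod.norm_def]
        rw [hnorm]
        apply max_le <;> linarith
      mul_max_le := by
        show (2 * ‖p‖ + 1) * max (t₀ + 4⁻¹ - t₀) (t₀ - (t₀ - 4⁻¹)) ≤ (‖p‖ + 1) - 0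
        have hp0 : (0:ℝ) ≤ ‖p‖ := norm_nonneg p
        have : max (t₀ + 4⁻¹ - t₀) (t₀ - (t₀ - 4⁻¹)) = (4⁻¹ : ℝ) := by
          rw [show t₀ + 4⁻¹ - t₀ = (4⁻¹:ℝ) by ring, show t₀ - (t₀ - 4⁻¹) = (4⁻¹:ℝ) by ring,
            max_self]
        rw [this]; linarith }
  obtain ⟨f, hf0, hf⟩ := hpl.exists_eq_forall_mem_Icc_hasDerivWithinAt₀
  exact ⟨f, hf0, hf⟩

lemma pGlue {f g : ℝ → ℝ × ℝ} {a b c : ℝ} (hab : a ≤ b) (hbc : b ≤ c)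
    (hf : ∀ t ∈ Icc a b, HasDerivWithinAt f (pF (f t)) (Icc a b) t)
    (hg : ∀ t ∈ Icc b c, HasDerivWithinAt g (pF (g t)) (Icc b c) t)
    (hfg : f b = g b) :
    ∃ h : ℝ → ℝ × ℝ, (∀ t ∈ Icc a b, h t = f t) ∧ (∀ t ∈ Icc b c, h t = g t) ∧
      ∀ t ∈ Icc a c, HasDerivWithinAt h (pF (h t)) (Icc a c) t := by
  classical
  set h : ℝ → ℝ × ℝ := fun t => if t ≤ b then f t else g t with hh
  have heqf : ∀ t ∈ Icc a b, h t = f t := by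
    intro t ht
    simp only [hh]
    exact if_pos ht.2
  have heqg : ∀ t ∈ Icc b c, h t = g t := by
    intro t ht
    simp only [hh]
    split_ifs with h'
    · have : t = b := le_antisymm h' ht.1
      rw [this, hfg]
    · rfl
  refine ⟨h, heqf, heqg, ?_⟩
  intro t ht
  rcases lt_trichotomy t b with hlt | heq | hgt
  · have htb : t ∈ Icc a b := ⟨ht.1, hlt.le⟩
    have hmem : Icc a b ∈ nhdsWithin t (Icc a c) :=
      mem_nhdsWithin.mpr ⟨Iio b, isOpen_Iio, hlt, fun s hs => ⟨hs.2.1, hs.1.le⟩⟩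
    have hd := (hf t htb).mono_of_mem_nhdsWithin hmem
    refine hd.congr_of_eventuallyEq ?_ (heqf t htb) |>.congr_deriv ?_
    · filter_upwards [nhdsWithin_le_nhds (Iio_mem_nhds hlt)] with s hs
      exact if_pos hs.le
    · rw [heqf t htb]
  · subst heq
    have h1 : HasDerivWithinAt h (pF (h t)) (Icc a t) t := by
      have := (hf t ⟨hab, le_rfl⟩).congr (fun s hs => heqf s hs) (heqf t ⟨hab, le_rfl⟩)
      rwa [heqf t ⟨hab, le_rfl⟩]
    have h2 : HasDerivWithinAt h (pF (h t)) (Icc t c) t := by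
      have := (hg t ⟨le_rfl, hbc⟩).congr (fun s hs => heqg s hs) (heqg t ⟨le_rfl, hbc⟩)
      rwa [heqg t ⟨le_rfl, hbc⟩]
    have := h1.union h2
    rwa [Icc_union_Icc_eq_Icc hab hbc] at this
  · have htb : t ∈ Icc b c := ⟨hgt.le, ht.2⟩
    have hmem : Icc b c ∈ nhdsWithin t (Icc a c) :=
      mem_nhdsWithin.mpr ⟨Ioi b, isOpen_Ioi, hgt, fun s hs => ⟨hs.1.le, hs.2.2⟩⟩
    have hd := (hg t htb).mono_of_mem_nhdsWithin hmem
    refine hd.congr_of_eventuallyEq ?_ (heqg t htb) |>.congr_deriv ?_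
    · filter_upwards [nhdsWithin_le_nhds (Ioi_mem_nhds hgt)] with s hs
      exact if_neg (not_le.mpr hs)
    · rw [heqg t htb]

lemma pSol (p₀ : ℝ × ℝ) (n : ℕ) :
    ∃ f : ℝ → ℝ × ℝ, f 0 = p₀ ∧ ∀ t ∈ Icc (-(n * 4⁻¹ : ℝ)) (n * 4⁻¹),
      HasDerivWithinAt f (pF (f t)) (Icc (-(n * 4⁻¹ : ℝ)) (n * 4⁻¹)) t := by
  induction n with
  | zero =>
    obtain ⟨f, hf0, hf⟩ := pLocal 0 p₀
    refine ⟨f, hf0, fun t ht => ?_⟩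
    have hsub : Icc (-((0:ℕ) * 4⁻¹ : ℝ)) ((0:ℕ) * 4⁻¹) ⊆ Icc ((0:ℝ) - 4⁻¹) (0 + 4⁻¹) := by
      apply Icc_subset_Icc <;> norm_num
    exact (hf t (hsub ht)).mono hsub
  | succ n ih =>
    obtain ⟨f, hf0, hf⟩ := ih
    set a : ℝ := n * 4⁻¹ with ha
    have ha0 : 0 ≤ a := by positivity
    -- extend to the right
    obtain ⟨g, hg0, hg⟩ := pLocal a (f a)
    have hg' : ∀ t ∈ Icc a (a + 4⁻¹), HasDerivWithinAt g (pF (g t)) (Icc a (a + 4⁻¹)) t := by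
      intro t ht
      exact (hg t ⟨by linarith [ht.1], ht.2⟩).mono (Icc_subset_Icc (by linarith) le_rfl)
    obtain ⟨h, hhf, hhg, hh⟩ := pGlue (by linarith : -a ≤ a) (by linarith : a ≤ a + 4⁻¹)
      hf hg' hg0.symm
    -- extend to the left
    obtain ⟨e, he0, he⟩ := pLocal (-a) (h (-a))
    have he' : ∀ t ∈ Icc (-a - 4⁻¹) (-a), HasDerivWithinAt e (pF (e t)) (Icc (-a - 4⁻¹) (-a)) t := by
      intro t ht
      exact (he t ⟨ht.1, by linarith [ht.2]⟩).mono (Icc_subset_Icc le_rfl (by linarith))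
    obtain ⟨k, hke, hkh, hk⟩ := pGlue (by linarith : -a - 4⁻¹ ≤ -a)
      (by linarith : -a ≤ a + 4⁻¹) he' hh he0
    have hcast : ((n + 1 : ℕ) : ℝ) * 4⁻¹ = a + 4⁻¹ := by push_cast; ring
    have hcast' : -(((n + 1 : ℕ) : ℝ) * 4⁻¹) = -a - 4⁻¹ := by rw [hcast]; ring
    refine ⟨k, ?_, ?_⟩
    · rw [hkh 0 ⟨by linarith, by linarith⟩, hhf 0 ⟨by linarith, by linarith⟩, hf0]
    · rw [hcast]
      have hneg : -(a + 4⁻¹) = -a - 4⁻¹ := by ring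
      rw [hneg]
      exact hk

noncomputable def pG (p₀ : ℝ × ℝ) (n : ℕ) : ℝ → ℝ × ℝ := (pSol p₀ n).choose

lemma pG_zero (p₀ : ℝ × ℝ) (n : ℕ) : pG p₀ n 0 = p₀ := (pSol p₀ n).choose_spec.1

lemma pG_deriv (p₀ : ℝ × ℝ) (n : ℕ) : ∀ t ∈ Icc (-(n * 4⁻¹ : ℝ)) (n * 4⁻¹),
    HasDerivWithinAt (pG p₀ n) (pF (pG p₀ n t)) (Icc (-(n * 4⁻¹ : ℝ)) (n * 4⁻¹)) t :=
  (pSol p₀ n).choose_spec.2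

lemma pAgree (p₀ : ℝ × ℝ) (m n : ℕ) (t : ℝ) (hm : |t| ≤ m * 4⁻¹) (hn : |t| ≤ n * 4⁻¹) :
    pG p₀ m t = pG p₀ n t := by
  set c : ℝ := min ((m:ℝ) * 4⁻¹) ((n:ℝ) * 4⁻¹) with hc
  have hc0 : 0 ≤ c := le_min (by positivity) (by positivity)
  rcases eq_or_lt_of_le hc0 with hceq | hclt
  · have ht0 : t = 0 := by
      have : |t| ≤ c := le_min hm hn
      have : |t| ≤ 0 := by rw [hceq]; exact this
      simpa [abs_nonpos_iff] using this
    rw [ht0, pG_zero, pG_zero]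
  · have hcm : c ≤ (m:ℝ) * 4⁻¹ := min_le_left _ _
    have hcn : c ≤ (n:ℝ) * 4⁻¹ := min_le_right _ _
    have key : EqOn (pG p₀ m) (pG p₀ n) (Icc (-c) c) := by
      apply ODE_solution_unique_of_mem_Icc (v := fun _ x => pF x) (s := fun _ => (univ : Set (ℝ × ℝ)))
        (fun _ _ => pF_lip.lipschitzOnWith) (t₀ := 0) ⟨by linarith, hclt⟩
      · intro s hs
        exact ((pG_deriv p₀ m s ⟨by linarith [hs.1], by linarith [hs.2]⟩).continuousWithinAt).mono
          (Icc_subset_Icc (by linarith) (by linarith))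
      · intro s hs
        exact (pG_deriv p₀ m s ⟨by linarith [hs.1], by linarith [hs.2]⟩).hasDerivAt
          (Icc_mem_nhds (by linarith [hs.1]) (by linarith [hs.2]))
      · exact fun _ _ => mem_univ _
      · intro s hs
        exact ((pG_deriv p₀ n s ⟨by linarith [hs.1], by linarith [hs.2]⟩).continuousWithinAt).mono
          (Icc_subset_Icc (by linarith) (by linarith))
      · intro s hs
        exact (pG_deriv p₀ n s ⟨by linarith [hs.1], by linarith [hs.2]⟩).hasDerivAt
          (Icc_mem_nhds (by linarith [hs.1]) (by linarith [hs.2]))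
      · exact fun _ _ => mem_univ _
      · rw [pG_zero, pG_zero]
    exact key (abs_le.mp (le_min hm hn))

end PendulumAux

/-- For every initial condition `(x₀, y₀) ∈ ℝ²` the nonlinear pendulum ODE
`ẋ = y`, `ẏ = -sin(2πx)` has a global-in-time solution. -/
theorem pendulum_global_solution (x₀ y₀ : ℝ) :
    ∃ x y : ℝ → ℝ, x 0 = x₀ ∧ y 0 = y₀ ∧
      (∀ t : ℝ, HasDerivAt x (y t) t) ∧
      (∀ t : ℝ, HasDerivAt y (-Real.sin (2 * π * x t)) t) := by
  set p₀ : ℝ × ℝ := (x₀, y₀) with hp₀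
  set h : ℝ → ℝ × ℝ := fun s => pG p₀ (⌈|s| * 4⌉₊ + 1) s with hh
  have hbound : ∀ s : ℝ, |s| < (↑(⌈|s| * 4⌉₊ + 1) : ℝ) * 4⁻¹ := by
    intro s
    have h1 : |s| * 4 ≤ (⌈|s| * 4⌉₊ : ℝ) := Nat.le_ceil _
    push_cast
    nlinarith [abs_nonneg s]
  have key : ∀ t : ℝ, HasDerivAt h (pF (h t)) t := by
    intro t
    set n : ℕ := ⌈|t| * 4⌉₊ + 1 with hn
    have htn : |t| < (n : ℝ) * 4⁻¹ := hbound t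
    have htn' := abs_lt.mp htn
    have hd : HasDerivAt (pG p₀ n) (pF (pG p₀ n t)) t :=
      (pG_deriv p₀ n t ⟨htn'.1.le, htn'.2.le⟩).hasDerivAt (Icc_mem_nhds htn'.1 htn'.2)
    have hev : h =ᶠ[nhds t] pG p₀ n := by
      have hopen : {s : ℝ | |s| < (n : ℝ) * 4⁻¹} ∈ nhds t :=
        (isOpen_lt (continuous_abs) continuous_const).mem_nhds htn
      filter_upwards [hopen] with s hs
      exact pAgree p₀ (⌈|s| * 4⌉₊ + 1) n s (hbound s).le hs.le
    have hht : h t = pG p₀ n t := hev.self_of_nhds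
    have := hd.congr_of_eventuallyEq hev
    rwa [hht]
  refine ⟨fun t => (h t).1, fun t => (h t).2, ?_, ?_, ?_, ?_⟩
  · have h0 : h 0 = p₀ := by
      simp only [hh]
      simpa using pG_zero p₀ 1
    show (h 0).1 = x₀
    rw [h0]
  · have h0 : h 0 = p₀ := by
      simp only [hh]
      simpa using pG_zero p₀ 1
    show (h 0).2 = y₀
    rw [h0]
  · intro t
    have := (key t).fst
    exact this
  · intro t
    have := (key t).snd
    exact this
end

section
/- Let n, m be positive integers, K an n×n real symmetric positive definite matrix, W an n×n real symmetric positive semidefinite matrix, G an m×n real matrix, ε > 0, and h_bd ∈ ℝⁿ. Define the objective f(c) = (Kc − h_bd)ᵀ·W·(Kc − h_bd) + ‖G·K·c‖² + ε·cᵀ·K·c for c ∈ ℝⁿ. Then f has a unique global minimizer over ℝⁿ, and a vector c ∈ ℝⁿ minimizes f if and only if it satisfies the normal equation ((W + Gᵀ·G)·K + ε·I)·c = W·h_bd. -/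
open Matrix

lemma dot_shift {n : ℕ} (A : Matrix (Fin n) (Fin n) ℝ) (hA : Aᵀ = A)
    (x y : Fin n → ℝ) : x ⬝ᵥ A.mulVec y = A.mulVec x ⬝ᵥ y := by
  rw [dotProduct_mulVec, ← mulVec_transpose, hA]

lemma dot_shift' {n m : ℕ} (A : Matrix (Fin m) (Fin n) ℝ)
    (x : Fin n → ℝ) (y : Fin m → ℝ) : x ⬝ᵥ Aᵀ.mulVec y = A.mulVec x ⬝ᵥ y := by
  rw [dotProduct_mulVec, ← mulVec_transpose, transpose_transpose]

lemma dot_self_nonneg {n : ℕ} (v : Fin n → ℝ) : 0 ≤ v ⬝ᵥ v := by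
  simpa using dotProduct_self_star_nonneg v

/-- The least-squares objective
`f c = (Kc - h_bd)ᵀ W (Kc - h_bd) + ‖G K c‖² + ε cᵀ K c`
(with `K` symmetric positive definite, `W` symmetric positive semidefinite, `ε > 0`)
has a unique global minimizer, and `c` minimizes `f` iff it satisfies the normal
equation `((W + Gᵀ G) K + ε I) c = W h_bd`. -/
theorem bvp_least_squares_normal_equation {n m : ℕ} (hn : 0 < n) (hm : 0 < m)
    (K : Matrix (Fin n) (Fin n) ℝ) (hK : K.PosDef)
    (W : Matrix (Fin n) (Fin n) ℝ) (hW : W.PosSemidef)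
    (G : Matrix (Fin m) (Fin n) ℝ) (ε : ℝ) (hε : 0 < ε)
    (h_bd : Fin n → ℝ) :
    let f : (Fin n → ℝ) → ℝ := fun c =>
      (K.mulVec c - h_bd) ⬝ᵥ W.mulVec (K.mulVec c - h_bd) +
        (G * K).mulVec c ⬝ᵥ (G * K).mulVec c + ε * (c ⬝ᵥ K.mulVec c)
    (∃! c : Fin n → ℝ, ∀ d : Fin n → ℝ, f c ≤ f d) ∧
      ∀ c : Fin n → ℝ, (∀ d : Fin n → ℝ, f c ≤ f d) ↔
        ((W + Gᵀ * G) * K + ε • (1 : Matrix (Fin n) (Fin n) ℝ)).mulVec c =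
          W.mulVec h_bd := by
  intro f
  have hKs : Kᵀ = K := by
    have := hK.1
    rwa [IsHermitian, conjTranspose_eq_transpose_of_trivial] at this
  have hWs : Wᵀ = W := by
    have := hW.1
    rwa [IsHermitian, conjTranspose_eq_transpose_of_trivial] at this
  set P : Matrix (Fin n) (Fin n) ℝ := W + Gᵀ * G with hPdef
  have hPs : Pᵀ = P := by
    simp [hPdef, transpose_add, transpose_mul, hWs]
  set M : Matrix (Fin n) (Fin n) ℝ := K * P * K + ε • K with hMdef
  set b : Fin n → ℝ := K.mulVec (W.mulVec h_bd) with hbdef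
  set N : Matrix (Fin n) (Fin n) ℝ := P * K + ε • (1 : Matrix (Fin n) (Fin n) ℝ) with hNdef
  have hMs : Mᵀ = M := by
    simp [hMdef, transpose_add, transpose_mul, transpose_smul, hKs, hPs, Matrix.mul_assoc]
  have hMN : M = K * N := by
    rw [hMdef, hNdef]
    conv_rhs => rw [Matrix.mul_add, ← Matrix.mul_assoc, mul_smul_comm, Matrix.mul_one]
  -- psd of P
  have hPpsd : ∀ x : Fin n → ℝ, 0 ≤ x ⬝ᵥ P.mulVec x := by
    intro x
    have h1 : 0 ≤ x ⬝ᵥ W.mulVec x := by simpa using hW.dotProduct_mulVec_nonneg x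
    have h2 : x ⬝ᵥ (Gᵀ * G).mulVec x = G.mulVec x ⬝ᵥ G.mulVec x := by
      rw [← mulVec_mulVec, dot_shift']
    have h3 : 0 ≤ G.mulVec x ⬝ᵥ G.mulVec x := dot_self_nonneg _
    rw [hPdef, add_mulVec, dotProduct_add, h2]
    linarith
  -- quadratic form of M
  have hMq : ∀ x : Fin n → ℝ, x ⬝ᵥ M.mulVec x
      = K.mulVec x ⬝ᵥ P.mulVec (K.mulVec x) + ε * (x ⬝ᵥ K.mulVec x) := by
    intro x
    rw [hMdef, add_mulVec, dotProduct_add, smul_mulVec, dotProduct_smul, smul_eq_mul]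
    congr 1
    rw [Matrix.mul_assoc, ← mulVec_mulVec, ← mulVec_mulVec, dot_shift K hKs]
  have hMpos : ∀ x : Fin n → ℝ, x ≠ 0 → 0 < x ⬝ᵥ M.mulVec x := by
    intro x hx
    have h1 := hPpsd (K.mulVec x)
    have h2 : 0 < x ⬝ᵥ K.mulVec x := by simpa using hK.dotProduct_mulVec_pos hx
    rw [hMq]
    nlinarith
  have hMpsd : ∀ x : Fin n → ℝ, 0 ≤ x ⬝ᵥ M.mulVec x := by
    intro x
    by_cases hx : x = 0
    · simp [hx]
    · exact (hMpos x hx).le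
  have hMpd : M.PosDef := by
    refine PosDef.of_dotProduct_mulVec_pos (by rwa [IsHermitian, conjTranspose_eq_transpose_of_trivial]) fun x hx => ?_
    simpa using hMpos x hx
  -- f in quadratic form
  have hfq : ∀ c : Fin n → ℝ,
      f c = c ⬝ᵥ M.mulVec c - 2 * (c ⬝ᵥ b) + h_bd ⬝ᵥ W.mulVec h_bd := by
    intro c
    show (K.mulVec c - h_bd) ⬝ᵥ W.mulVec (K.mulVec c - h_bd) +
        (G * K).mulVec c ⬝ᵥ (G * K).mulVec c + ε * (c ⬝ᵥ K.mulVec c) = _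
    have e1 : (G * K).mulVec c ⬝ᵥ (G * K).mulVec c
        = K.mulVec c ⬝ᵥ (Gᵀ * G).mulVec (K.mulVec c) := by
      rw [← mulVec_mulVec, ← mulVec_mulVec (K.mulVec c) Gᵀ G, dot_shift']
    have e2 : h_bd ⬝ᵥ W.mulVec (K.mulVec c) = K.mulVec c ⬝ᵥ W.mulVec h_bd := by
      rw [dot_shift W hWs, dotProduct_comm]
    have e3 : c ⬝ᵥ b = K.mulVec c ⬝ᵥ W.mulVec h_bd := by
      rw [hbdef, dot_shift K hKs]
    rw [hMq, mulVec_sub, dotProduct_sub, sub_dotProduct, sub_dotProduct, e1, e2, e3]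
    rw [hPdef, add_mulVec, dotProduct_add]
    ring
  -- difference identity
  have hdiff : ∀ c d : Fin n → ℝ,
      f d - f c = (d - c) ⬝ᵥ M.mulVec (d - c) + 2 * ((d - c) ⬝ᵥ (M.mulVec c - b)) := by
    intro c d
    have hsym : c ⬝ᵥ M.mulVec d = d ⬝ᵥ M.mulVec c := by
      rw [dot_shift M hMs, dotProduct_comm]
    rw [hfq, hfq]
    simp only [mulVec_sub, dotProduct_sub, sub_dotProduct]
    rw [hsym]
    ring
  -- minimizer iff M c = b
  have hminM : ∀ c : Fin n → ℝ, (∀ d : Fin n → ℝ, f c ≤ f d) ↔ M.mulVec c = b := by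
    intro c
    constructor
    · intro hc
      set v : Fin n → ℝ := M.mulVec c - b with hv
      have key : ∀ u : Fin n → ℝ, u ⬝ᵥ v = 0 := by
        intro u
        set α : ℝ := u ⬝ᵥ M.mulVec u with hα
        have hα0 : 0 ≤ α := hMpsd u
        set β : ℝ := u ⬝ᵥ v with hβ
        have hall : ∀ t : ℝ, 0 ≤ α * t ^ 2 + 2 * t * β := by
          intro t
          have h1 := hc (c + t • u)
          have h2 := hdiff c (c + t • u)
          have e : (c + t • u) - c = t • u := by abel
          rw [e] at h2
          have e2 : (t • u) ⬝ᵥ M.mulVec (t • u) = α * t ^ 2 := by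
            rw [mulVec_smul, dotProduct_smul, smul_dotProduct, hα]
            simp only [smul_eq_mul]; ring
          have e3 : (t • u) ⬝ᵥ (M.mulVec c - b) = t * β := by
            rw [smul_dotProduct]; simp [hβ, hv, smul_eq_mul]
          rw [e2, e3] at h2
          linarith
        have hap : 0 < α + 1 := by linarith
        have h := hall (-β / (α + 1))
        have e : α * (-β / (α + 1)) ^ 2 + 2 * (-β / (α + 1)) * β
            = -(β ^ 2 * (α + 2)) / (α + 1) ^ 2 := by
          field_simp
          ring
        rw [e] at h
        have h2 : β ^ 2 * (α + 2) ≤ 0 := by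
          by_contra hcon
          push_neg at hcon
          have : -(β ^ 2 * (α + 2)) / (α + 1) ^ 2 < 0 :=
            div_neg_of_neg_of_pos (by linarith) (by positivity)
          linarith
        have hb2 : β ^ 2 ≤ 0 := by nlinarith
        have : β ^ 2 = 0 := le_antisymm hb2 (sq_nonneg β)
        exact pow_eq_zero_iff (two_ne_zero) |>.mp this
      have hvv : v ⬝ᵥ v = 0 := key v
      have hv0 : v = 0 := dotProduct_self_eq_zero.mp hvv
      exact sub_eq_zero.mp hv0
    · intro hc d
      have h := hdiff c d
      rw [hc, sub_self, dotProduct_zero, mul_zero, add_zero] at h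
      have h2 := hMpsd (d - c)
      linarith
  -- normal equation equivalence
  have hKinj : Function.Injective K.mulVec :=
    mulVec_injective_iff_isUnit.mpr hK.isUnit
  have hnorm : ∀ c : Fin n → ℝ, M.mulVec c = b ↔ N.mulVec c = W.mulVec h_bd := by
    intro c
    rw [hMN, ← mulVec_mulVec, hbdef]
    exact ⟨fun h => hKinj h, fun h => by rw [h]⟩
  have hMunit : IsUnit M := hMpd.isUnit
  have hMinj : Function.Injective M.mulVec := mulVec_injective_iff_isUnit.mpr hMunit
  have hsol : M.mulVec (M⁻¹.mulVec b) = b := by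
    rw [mulVec_mulVec, Matrix.mul_nonsing_inv _ (isUnit_iff_isUnit_det _ |>.1 hMunit),
      one_mulVec]
  refine ⟨⟨M⁻¹.mulVec b, (hminM _).mpr hsol,
    fun y hy => hMinj (((hminM y).mp hy).trans hsol.symm)⟩, fun c => (hminM c).trans (hnorm c)⟩
end

section
/- Let n, m be positive integers, K an n×n real symmetric positive definite matrix, W an n×n real symmetric positive semidefinite matrix, G an m×n real matrix, and ε > 0. Then the minimum over nonzero c ∈ ℝⁿ of the Rayleigh quotient (‖G·K·c‖² + (Kc)ᵀ·W·(Kc) + ε·cᵀ·K·c) / ‖K·c‖² is attained, and equals the smallest eigenvalue of the symmetric matrix M = Gᵀ·G + W + ε·K⁻¹. -/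
open Matrix

lemma dot_self_pos {n : ℕ} {v : Fin n → ℝ} (hv : v ≠ 0) : 0 < v ⬝ᵥ v := by
  rcases lt_or_eq_of_le (Finset.sum_nonneg fun i _ => mul_self_nonneg (v i)) with h | h
  · exact h
  · exact absurd (dotProduct_self_eq_zero.mp h.symm) hv

lemma star_eq_tr {n : ℕ} (U : Matrix (Fin n) (Fin n) ℝ) : star U = Uᵀ := by
  ext i j; simp [Matrix.star_eq_conjTranspose, Matrix.conjTranspose_apply]

lemma rayleigh_isLeast {n : ℕ} (hn : 0 < n) (M : Matrix (Fin n) (Fin n) ℝ)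
    (hM : M.IsHermitian) :
    IsLeast {r : ℝ | ∃ v : Fin n → ℝ, v ≠ 0 ∧ (v ⬝ᵥ M.mulVec v) / (v ⬝ᵥ v) = r}
      (Finset.univ.inf'
        (Finset.univ_nonempty_iff.mpr (Fin.pos_iff_nonempty.mp hn)) hM.eigenvalues) := by
  have hne : (Finset.univ : Finset (Fin n)).Nonempty :=
    Finset.univ_nonempty_iff.mpr (Fin.pos_iff_nonempty.mp hn)
  set lmin := Finset.univ.inf' hne hM.eigenvalues with hlmin
  constructor
  · -- membership: achieved at eigenvector of minimal eigenvalue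
    obtain ⟨i, _, hi⟩ := Finset.exists_mem_eq_inf' hne hM.eigenvalues
    set v : Fin n → ℝ := ⇑(hM.eigenvectorBasis i) with hv
    have hvne : v ≠ 0 := by
      intro h
      apply hM.eigenvectorBasis.orthonormal.ne_zero i
      apply PiLp.ext
      intro j
      exact congrFun h j
    refine ⟨v, hvne, ?_⟩
    have hMv : M *ᵥ v = hM.eigenvalues i • v := hM.mulVec_eigenvectorBasis i
    have hpos : 0 < v ⬝ᵥ v := dot_self_pos hvne
    rw [hMv, dotProduct_smul, smul_eq_mul, mul_div_assoc, div_self (ne_of_gt hpos), mul_one]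
    exact hi.symm
  · -- lower bound
    rintro r ⟨v, hvne, rfl⟩
    have hpos : 0 < v ⬝ᵥ v := dot_self_pos hvne
    rw [le_div_iff₀ hpos]
    set U : Matrix (Fin n) (Fin n) ℝ := (hM.eigenvectorUnitary : Matrix (Fin n) (Fin n) ℝ)
      with hU
    have hUst : U * star U = 1 := (Unitary.mem_iff.mp hM.eigenvectorUnitary.prop).2
    set w : Fin n → ℝ := star U *ᵥ v with hw
    have hvU : v ᵥ* U = w := by
      rw [hw, star_eq_tr, ← vecMul_transpose, transpose_transpose]
    have hspec : M = U * diagonal hM.eigenvalues * star U := by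
      have := hM.spectral_theorem
      simp only [RCLike.ofReal_real_eq_id, Function.id_comp] at this
      rw [hU]
      exact this
    have h1 : v ⬝ᵥ M *ᵥ v = w ⬝ᵥ (diagonal hM.eigenvalues) *ᵥ w := by
      conv_lhs => rw [hspec]
      rw [← mulVec_mulVec, ← mulVec_mulVec, dotProduct_mulVec, hvU]
    have h2 : v ⬝ᵥ v = w ⬝ᵥ w := by
      have : w ⬝ᵥ (star U *ᵥ v) = (w ᵥ* star U) ⬝ᵥ v := dotProduct_mulVec _ _ _
      rw [hw] at this ⊢
      rw [this, star_eq_tr, ← mulVec_transpose, transpose_transpose,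
        ← star_eq_tr U, mulVec_mulVec, hUst, one_mulVec, dotProduct_comm]
    rw [h1, h2, dotProduct, Finset.mul_sum]
    apply Finset.sum_le_sum
    intro j _
    rw [mulVec_diagonal]
    have hle : lmin ≤ hM.eigenvalues j := Finset.inf'_le _ (Finset.mem_univ j)
    calc lmin * (w j * w j) ≤ hM.eigenvalues j * (w j * w j) :=
          mul_le_mul_of_nonneg_right hle (mul_self_nonneg _)
      _ = w j * (hM.eigenvalues j * w j) := by ring

/-- The minimum over nonzero `c` of the Rayleigh quotient
`(‖G K c‖² + (Kc)ᵀ W (Kc) + ε cᵀ K c) / ‖K c‖²`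
is attained and equals the smallest eigenvalue of the symmetric matrix
`M = Gᵀ G + W + ε K⁻¹`. -/
theorem rayleigh_quotient_min_eq_smallest_eigenvalue {n m : ℕ} (hn : 0 < n) (hm : 0 < m)
    (K : Matrix (Fin n) (Fin n) ℝ) (hK : K.PosDef)
    (W : Matrix (Fin n) (Fin n) ℝ) (hW : W.PosSemidef)
    (G : Matrix (Fin m) (Fin n) ℝ) (ε : ℝ) (hε : 0 < ε)
    (hM : (Gᵀ * G + W + ε • K⁻¹).IsHermitian) :
    let Q : (Fin n → ℝ) → ℝ := fun c =>
      ((G * K).mulVec c ⬝ᵥ (G * K).mulVec c +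
          K.mulVec c ⬝ᵥ W.mulVec (K.mulVec c) + ε * (c ⬝ᵥ K.mulVec c)) /
        (K.mulVec c ⬝ᵥ K.mulVec c)
    IsLeast {r : ℝ | ∃ c : Fin n → ℝ, c ≠ 0 ∧ Q c = r}
      (Finset.univ.inf'
        (Finset.univ_nonempty_iff.mpr (Fin.pos_iff_nonempty.mp hn)) hM.eigenvalues) := by
  intro Q
  set M : Matrix (Fin n) (Fin n) ℝ := Gᵀ * G + W + ε • K⁻¹ with hMdef
  have hdet : IsUnit K.det := isUnit_iff_ne_zero.mpr (ne_of_gt hK.det_pos)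
  have hKinvK : K⁻¹ * K = 1 := nonsing_inv_mul K hdet
  have hKc : ∀ c : Fin n → ℝ, K⁻¹ *ᵥ (K *ᵥ c) = c := by
    intro c; rw [mulVec_mulVec, hKinvK, one_mulVec]
  -- Q c equals the Rayleigh quotient of M at h = K c
  have hQ : ∀ c : Fin n → ℝ,
      Q c = ((K *ᵥ c) ⬝ᵥ M *ᵥ (K *ᵥ c)) / ((K *ᵥ c) ⬝ᵥ (K *ᵥ c)) := by
    intro c
    show ((G * K) *ᵥ c ⬝ᵥ (G * K) *ᵥ c + (K *ᵥ c) ⬝ᵥ W *ᵥ (K *ᵥ c) + ε * (c ⬝ᵥ K *ᵥ c))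
        / ((K *ᵥ c) ⬝ᵥ (K *ᵥ c)) = ((K *ᵥ c) ⬝ᵥ M *ᵥ (K *ᵥ c)) / ((K *ᵥ c) ⬝ᵥ (K *ᵥ c))
    congr 1
    rw [hMdef]
    simp only [add_mulVec, dotProduct_add, smul_mulVec, dotProduct_smul, smul_eq_mul,
      hKc c]
    rw [← mulVec_mulVec c G K, ← mulVec_mulVec (K *ᵥ c) Gᵀ G,
      dotProduct_mulVec (K *ᵥ c) Gᵀ, vecMul_transpose, dotProduct_comm (K *ᵥ c) c]
  -- the two sets coincide
  have hset : {r : ℝ | ∃ c : Fin n → ℝ, c ≠ 0 ∧ Q c = r}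
      = {r : ℝ | ∃ v : Fin n → ℝ, v ≠ 0 ∧ (v ⬝ᵥ M.mulVec v) / (v ⬝ᵥ v) = r} := by
    ext r
    constructor
    · rintro ⟨c, hc, rfl⟩
      refine ⟨K *ᵥ c, ?_, (hQ c).symm⟩
      intro h0
      apply hc
      rw [← hKc c, h0, mulVec_zero]
    · rintro ⟨v, hv, rfl⟩
      refine ⟨K⁻¹ *ᵥ v, ?_, ?_⟩
      · intro h0
        apply hv
        have := congrArg (K *ᵥ ·) h0
        simpa [mulVec_mulVec, Matrix.mul_nonsing_inv K hdet, one_mulVec] using this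
      · rw [hQ, mulVec_mulVec, Matrix.mul_nonsing_inv K hdet, one_mulVec]
  rw [hset]
  exact rayleigh_isLeast hn M hM
end
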